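/- arXiv:2305.09984 — 2 statements merged into one kernel-verified Lean document; each statement's English description precedes it below -/
import Mathlib

section
/- Let f be a nonzero noncommutative polynomial over a field F in variables x_1,...,x_n, and let m = x_{i_1} x_{i_2} ... x_{i_d} be a monomial with nonzero coefficient in f, where every monomial of f has degree at most d. Define (d+1)×(d+1) matrices M_1,...,M_n over F by M_j(ℓ, ℓ+1) = 1 if x_j = x_{i_{ℓ+1}} (for 0 ≤ ℓ ≤ d−1) and all other entries 0. Then f(M_1,...,M_n) ≠ 0; specifically, the (0,d) entry of f(M_1,...,M_n) equals the coefficient of m in f. -/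
open Matrix

/-- Entry formula for products of the automaton transition matrices. -/
theorem prodEntry {F : Type*} [Field F] {n d : ℕ} (m : List (Fin n)) (hlen : m.length = d)
    (M : Fin n → Matrix (Fin (d + 1)) (Fin (d + 1)) F)
    (hM : ∀ j : Fin n, M j = Matrix.of fun (a b : Fin (d + 1)) =>
      if (b : ℕ) = (a : ℕ) + 1 ∧ m[(a : ℕ)]? = some j then (1 : F) else 0) :
    ∀ (w : List (Fin n)) (a b : Fin (d + 1)),
      ((w.map M).prod) a b =
        if (b : ℕ) = (a : ℕ) + w.length ∧ ∀ k < w.length, m[(a : ℕ) + k]? = w[k]?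
        then (1 : F) else 0 := by
  intro w
  induction w with
  | nil =>
    intro a b
    simp only [List.map_nil, List.prod_nil, Matrix.one_apply, List.length_nil, Nat.add_zero]
    by_cases h : a = b
    · subst h; simp
    · rw [if_neg h, if_neg]
      rintro ⟨hb, -⟩
      exact h (Fin.ext hb.symm)
  | cons j w ih =>
    intro a b
    simp only [List.map_cons, List.prod_cons, Matrix.mul_apply, hM, Matrix.of_apply, ih,
      List.length_cons]
    by_cases h : m[(a : ℕ)]? = some j
    · have ha : (a : ℕ) < d := by
        obtain ⟨hk, -⟩ := List.getElem?_eq_some_iff.mp h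
        omega
      have key : ((b : ℕ) = ((a : ℕ) + 1) + w.length ∧
            ∀ k < w.length, m[((a : ℕ) + 1) + k]? = w[k]?) ↔
          ((b : ℕ) = (a : ℕ) + (w.length + 1) ∧
            ∀ k < w.length + 1, m[(a : ℕ) + k]? = (j :: w)[k]?) := by
        constructor
        · rintro ⟨hb, hP⟩
          refine ⟨by omega, fun k hk => ?_⟩
          cases k with
          | zero => simpa using h
          | succ k =>
            have e : (a : ℕ) + (k + 1) = (a : ℕ) + 1 + k := by omega
            rw [e, List.getElem?_cons_succ]
            exact hP k (by omega)
        · rintro ⟨hb, hP⟩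
          refine ⟨by omega, fun k hk => ?_⟩
          have := hP (k + 1) (by omega)
          have e : (a : ℕ) + (k + 1) = (a : ℕ) + 1 + k := by omega
          rwa [e, List.getElem?_cons_succ] at this
      rw [Finset.sum_eq_single (⟨(a : ℕ) + 1, by omega⟩ : Fin (d + 1))]
      · rw [if_pos ⟨rfl, h⟩, one_mul, if_congr key rfl rfl]
      · intro c _ hne
        rw [if_neg, zero_mul]
        rintro ⟨hcv, -⟩
        exact hne (Fin.ext hcv)
      · intro habs; exact absurd (Finset.mem_univ _) habs
    · rw [Finset.sum_eq_zero, if_neg]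
      · rintro ⟨-, hP⟩
        exact h (by simpa using hP 0 (by omega))
      · intro c _
        rw [if_neg, zero_mul]
        rintro ⟨-, hj⟩
        exact h hj

/-- automaton evaluation certifies a nonzero coefficient of a
noncommutative polynomial, represented as a finitely supported function on
words over the variables. -/
theorem stmt_0 {F : Type*} [Field F] (n d : ℕ)
    (f : List (Fin n) →₀ F) (m : List (Fin n))
    (hm : f m ≠ 0) (hlen : m.length = d)
    (hdeg : ∀ w ∈ f.support, w.length ≤ d)
    (M : Fin n → Matrix (Fin (d + 1)) (Fin (d + 1)) F)
    (hM : ∀ j : Fin n, M j = Matrix.of fun (a b : Fin (d + 1)) =>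
      if (b : ℕ) = (a : ℕ) + 1 ∧ m[(a : ℕ)]? = some j then (1 : F) else 0) :
    (∑ w ∈ f.support, f w • ((w.map M).prod)) (0 : Fin (d + 1)) (Fin.last d) = f m ∧
      (∑ w ∈ f.support, f w • ((w.map M).prod)) ≠ 0 := by
  have key := prodEntry m hlen M hM
  have hE : (∑ w ∈ f.support, f w • ((w.map M).prod)) (0 : Fin (d + 1)) (Fin.last d) = f m := by
    simp only [Matrix.sum_apply, Matrix.smul_apply, key, Fin.val_last, Fin.val_zero, zero_add,
      smul_eq_mul]
    rw [Finset.sum_eq_single m]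
    · rw [if_pos ⟨hlen.symm, fun k _ => rfl⟩, mul_one]
    · intro w hw hne
      rw [if_neg, mul_zero]
      rintro ⟨hl, hP⟩
      apply hne
      apply List.ext_getElem?
      intro k
      by_cases hk : k < w.length
      · exact (hP k hk).symm
      · rw [List.getElem?_eq_none (by omega), List.getElem?_eq_none (by omega)]
    · intro h
      exact absurd (Finsupp.mem_support_iff.mpr hm) h
  refine ⟨hE, fun h0 => hm ?_⟩
  rw [← hE, h0]
  rfl
end

section
/- Let D be a division ring, and let M be an s×s matrix over D of rank at least r+1 in the sense that M cannot be written as a product of an s×r matrix and an r×s matrix over D. If D is realized as a subalgebra of M_d(K) for a field K such that every nonzero element of D is an invertible d×d matrix, then the sd×sd block matrix over K corresponding to M has rank at least (r+1)·d over K. -/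
open Matrix

section aux

variable {D : Type*} [DivisionRing D]

/-- If `M` admits no factorization through `r`, then there are matrices `A, N`
with `A * M * N = 1` of size `r+1`. -/
lemma exists_one_factor {s r : ℕ} (M : Matrix (Fin s) (Fin s) D)
    (hM : ¬ ∃ (P : Matrix (Fin s) (Fin r) D) (Q : Matrix (Fin r) (Fin s) D), M = P * Q) :
    ∃ (A : Matrix (Fin (r + 1)) (Fin s) D) (N : Matrix (Fin s) (Fin (r + 1)) D),
      A * M * N = 1 := by
  classical
  set V : Submodule D (Fin s → D) := Submodule.span D (Set.range fun i => M i) with hV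
  have hMemV : ∀ i, M i ∈ V := fun i =>
    Submodule.subset_span (Set.mem_range_self i)
  let b : Module.Basis (Fin (Module.finrank D V)) D V := Module.finBasis D V
  -- row space has rank at least r+1
  have hrank : r + 1 ≤ Module.finrank D V := by
    by_contra h
    push_neg at h
    have hle : Module.finrank D V ≤ r := Nat.lt_succ_iff.mp h
    -- spanning family of size r
    set v : Fin r → (Fin s → D) := fun k =>
      if hk : (k : ℕ) < Module.finrank D V then (b ⟨k, hk⟩ : Fin s → D) else 0 with hv
    have hsub : V ≤ Submodule.span D (Set.range v) := by
      rw [hV]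
      rw [Submodule.span_le]
      rintro _ ⟨i, rfl⟩
      have : (⟨M i, hMemV i⟩ : V) ∈ Submodule.span D (Set.range b) := by
        rw [b.span_eq]; trivial
      have hmap := Submodule.mem_map_of_mem (f := V.subtype) this
      rw [Submodule.map_span] at hmap
      refine Submodule.span_mono ?_ hmap
      rintro _ ⟨_, ⟨k, rfl⟩, rfl⟩
      refine ⟨⟨(k : ℕ), lt_of_lt_of_le k.2 hle⟩, ?_⟩
      rw [hv]
      simp only [Fin.is_lt, dif_pos]
      rfl
    refine hM ?_
    have hc : ∀ i, ∃ c : Fin r → D, ∑ k, c k • v k = M i := fun i =>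
      (Submodule.mem_span_range_iff_exists_fun D).mp (hsub (hMemV i))
    choose c hc using hc
    refine ⟨Matrix.of c, Matrix.of fun k j => v k j, ?_⟩
    ext i j
    rw [Matrix.mul_apply]
    have := congrFun (hc i) j
    simpa [Finset.sum_apply] using this.symm
  -- pick r+1 independent vectors in V
  set w : Fin (r + 1) → (Fin s → D) := fun i => (b (Fin.castLE hrank i) : Fin s → D) with hw
  have hwV : ∀ i, w i ∈ V := fun i => (b (Fin.castLE hrank i)).2
  have hwi : LinearIndependent D w := by
    have h1 : LinearIndependent D fun i : Fin (r + 1) => b (Fin.castLE hrank i) :=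
      b.linearIndependent.comp _ (Fin.castLE_injective hrank)
    exact h1.map' V.subtype V.ker_subtype
  -- write each w i as a combination of rows of M
  have hA : ∀ i, ∃ a : Fin s → D, ∑ k, a k • M k = w i := fun i => by
    rw [hV] at hwV
    exact (Submodule.mem_span_range_iff_exists_fun D).mp (hwV i)
  choose a ha using hA
  set A : Matrix (Fin (r + 1)) (Fin s) D := Matrix.of a with hAdef
  have hAM : ∀ i, (A * M) i = w i := by
    intro i
    funext j
    rw [Matrix.mul_apply]
    have := congrFun (ha i) j
    simpa [Finset.sum_apply, hAdef] using this
  -- key: vecMul by A*M is injective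
  have hindep : LinearIndependent D (fun i => (A * M) i) := by
    have : (fun i => (A * M) i) = w := funext hAM
    rw [this]; exact hwi
  have hker : LinearMap.ker (A * M).vecMulLinear = ⊥ := by
    rw [LinearMap.ker_eq_bot']
    intro x hx
    have hx' : ∑ i, x i • (A * M) i = 0 := by
      funext j
      have := congrFun hx j
      simpa [Matrix.vecMul, dotProduct, Finset.sum_apply] using this
    funext i
    exact Fintype.linearIndependent_iff.mp hindep x hx' i
  obtain ⟨g, hg⟩ := (A * M).vecMulLinear.exists_leftInverse_of_injective hker
  set N : Matrix (Fin s) (Fin (r + 1)) D := Matrix.of fun j k => g (Pi.single j 1) k with hN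
  refine ⟨A, N, ?_⟩
  have hgy : ∀ y : Fin s → D, (fun k => ∑ j, y j * N j k) = g y := by
    intro y
    conv_rhs => rw [← Finset.univ_sum_single y]
    rw [map_sum]
    funext k
    rw [Finset.sum_apply]
    refine Finset.sum_congr rfl fun j _ => ?_
    have hsingle : Pi.single j (y j) = y j • (Pi.single j (1 : D) : Fin s → D) := by
      funext m
      by_cases hm : m = j <;> simp [Pi.single_apply, hm]
    rw [hsingle, g.map_smul]
    simp [hN, smul_eq_mul]
  ext i k
  have h1 : (A * M * N) i k = ∑ j, (A * M) i j * N j k := by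
    rw [Matrix.mul_apply]
  rw [h1, congrFun (hgy ((A * M) i)) k]
  have h2 : (A * M) i = (A * M).vecMulLinear (Pi.single i 1) := by
    rw [Matrix.vecMulLinear_apply, Matrix.single_one_vecMul]; rfl
  rw [h2]
  have := congrFun (LinearMap.congr_fun hg (Pi.single i 1)) k
  simp only [LinearMap.comp_apply, LinearMap.id_apply] at this
  rw [this]
  simp [Matrix.one_apply, Pi.single_apply, eq_comm]

end aux

/-- if an `s×s` matrix over a division ring `D` has inner rank at
least `r+1` (it admits no factorization through `r`), and `D` is realized inside
`M_d(K)` via a ring homomorphism (so every nonzero element of `D` becomes an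
invertible `d×d` matrix), then the corresponding `sd×sd` block matrix over `K`
has rank at least `(r+1)·d`. -/
theorem stmt_8 {D K : Type*} [DivisionRing D] [Field K] (s r d : ℕ)
    (M : Matrix (Fin s) (Fin s) D)
    (hM : ¬ ∃ (P : Matrix (Fin s) (Fin r) D) (Q : Matrix (Fin r) (Fin s) D), M = P * Q)
    (φ : D →+* Matrix (Fin d) (Fin d) K) :
    (r + 1) * d ≤
      (Matrix.of fun (x y : Fin s × Fin d) => φ (M x.1 y.1) x.2 y.2).rank := by
  classical
  obtain ⟨A, N, hAN⟩ := exists_one_factor M hM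
  let blk : ∀ {m n : ℕ}, Matrix (Fin m) (Fin n) D → Matrix (Fin m × Fin d) (Fin n × Fin d) K :=
    fun X => Matrix.of fun x y => φ (X x.1 y.1) x.2 y.2
  have hmul : ∀ {m n p : ℕ} (X : Matrix (Fin m) (Fin n) D) (Y : Matrix (Fin n) (Fin p) D),
      blk (X * Y) = blk X * blk Y := by
    intro m n p X Y
    ext ⟨i, a⟩ ⟨k, c⟩
    rw [Matrix.mul_apply, Fintype.sum_prod_type]
    simp only [blk, Matrix.of_apply, Matrix.mul_apply, map_sum, Matrix.sum_apply]
    exact Finset.sum_congr rfl fun j _ => by rw [_root_.map_mul, Matrix.mul_apply]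
  have hone : blk (1 : Matrix (Fin (r + 1)) (Fin (r + 1)) D) = 1 := by
    ext ⟨i, a⟩ ⟨j, b⟩
    by_cases h : i = j
    · subst h
      simp [blk, Matrix.one_apply, Prod.ext_iff]
    · simp [blk, Matrix.one_apply, h, Prod.ext_iff]
  have key : blk A * blk M * blk N = 1 := by
    rw [← hmul, ← hmul, hAN, hone]
  have hle : (blk A * blk M * blk N).rank ≤ (blk M).rank :=
    le_trans (Matrix.rank_mul_le_left _ _) (Matrix.rank_mul_le_right _ _)
  rw [key, Matrix.rank_one] at hle
  simpa [Fintype.card_prod] using hle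
end
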